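/- arXiv:2301.07589 — 5 statements merged into one kernel-verified Lean document; each statement's English description precedes it below -/
import Mathlib

section
/- If a group G contains a subgroup H of finite index isomorphic to ℤ^n × F_m (for some n, m ≥ 0), then G contains a normal subgroup H' of finite index with H' isomorphic to ℤ^{n'} × F_{m'} for some natural numbers n', m'. -/
open Subgroup

/-- A finitely generated free group is isomorphic to a free group on `Fin m'`. -/
theorem aux_fg_free_iso (K : Type) [Group K] [IsFreeGroup K] [Group.FG K] :
    ∃ m', Nonempty (K ≃* FreeGroup (Fin m')) := by
  classical
  set S := IsFreeGroup.Generators K with hS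
  let e : K ≃* FreeGroup S := IsFreeGroup.toFreeGroup K
  have hFG : Group.FG (FreeGroup S) :=
    Group.fg_of_surjective (f := e.toMonoidHom) e.surjective
  have hAb : Group.FG (Abelianization (FreeGroup S)) := by
    unfold Abelianization
    infer_instance
  have h1 : AddGroup.FG (FreeAbelianGroup S) :=
    AddGroup.fg_of_group_fg (G := Abelianization (FreeGroup S))
  have h2 : Module.Finite ℤ (FreeAbelianGroup S) := Module.Finite.iff_addGroup_fg.mpr h1
  have h3 : Finite S := Module.Finite.finite_basis (FreeAbelianGroup.basis S)
  have := Fintype.ofFinite S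
  exact ⟨Fintype.card S, ⟨e.trans (FreeGroup.freeGroupCongr (Fintype.equivFin S))⟩⟩

/-- Any subgroup of `ℤ^n` (multiplicatively) is isomorphic to some `ℤ^{n'}`. -/
theorem aux_subgroup_zn_iso (n : ℕ) (C : Subgroup (Multiplicative (Fin n → ℤ))) :
    ∃ n', Nonempty (C ≃* Multiplicative (Fin n' → ℤ)) := by
  classical
  let D : AddSubgroup (Fin n → ℤ) := Subgroup.toAddSubgroup' C
  let N : Submodule ℤ (Fin n → ℤ) := AddSubgroup.toIntSubmodule D
  obtain ⟨n', b⟩ := Submodule.basisOfPid (Pi.basisFun ℤ (Fin n)) N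
  let e1 : N ≃ₗ[ℤ] (Fin n' → ℤ) := b.equivFun
  let e0 : C ≃* Multiplicative N :=
    { toFun := fun x => Multiplicative.ofAdd (⟨Multiplicative.toAdd (x : Multiplicative (Fin n → ℤ)), x.2⟩ : N)
      invFun := fun y => ⟨Multiplicative.ofAdd ((Multiplicative.toAdd y : N) : Fin n → ℤ),
        (Multiplicative.toAdd y : N).2⟩
      left_inv := fun x => rfl
      right_inv := fun y => rfl
      map_mul' := fun x y => rfl }
  exact ⟨n', ⟨e0.trans (AddEquiv.toMultiplicative e1.toAddEquiv)⟩⟩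

theorem aux_fg_zn : Group.FG (Multiplicative (Fin n → ℤ)) := by
  have : Module.Finite ℤ (Fin n → ℤ) := inferInstance
  have : AddGroup.FG (Fin n → ℤ) := Module.Finite.iff_addGroup_fg.mp this
  infer_instance

theorem aux_fg_freegroup (m : ℕ) : Group.FG (FreeGroup (Fin m)) := by
  rw [Group.fg_iff]
  exact ⟨Set.range FreeGroup.of, FreeGroup.closure_range_of _, Set.finite_range _⟩

theorem aux_fg_prod (n m : ℕ) :
    Group.FG (Multiplicative (Fin n → ℤ) × FreeGroup (Fin m)) := by
  haveI h1 : Group.FG (Multiplicative (Fin n → ℤ)) := aux_fg_zn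
  haveI h2 : Group.FG (FreeGroup (Fin m)) := aux_fg_freegroup m
  obtain ⟨S1, hS1c, hS1f⟩ := Group.fg_iff.mp h1
  obtain ⟨S2, hS2c, hS2f⟩ := Group.fg_iff.mp h2
  rw [Group.fg_iff]
  refine ⟨(MonoidHom.inl _ _ '' S1) ∪ (MonoidHom.inr _ _ '' S2),
    ?_, (hS1f.image _).union (hS2f.image _)⟩
  rw [eq_top_iff]
  rintro ⟨a, f⟩ -
  have ha : ((a, 1) : Multiplicative (Fin n → ℤ) × FreeGroup (Fin m)) ∈
      Subgroup.closure (MonoidHom.inl _ _ '' S1) := by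
    have : (MonoidHom.inl (Multiplicative (Fin n → ℤ)) (FreeGroup (Fin m))) a ∈
        (Subgroup.closure S1).map (MonoidHom.inl _ _) :=
      Subgroup.mem_map_of_mem _ (by rw [hS1c]; trivial)
    rwa [MonoidHom.map_closure] at this
  have hf : ((1, f) : Multiplicative (Fin n → ℤ) × FreeGroup (Fin m)) ∈
      Subgroup.closure (MonoidHom.inr _ _ '' S2) := by
    have : (MonoidHom.inr (Multiplicative (Fin n → ℤ)) (FreeGroup (Fin m))) f ∈
        (Subgroup.closure S2).map (MonoidHom.inr _ _) :=
      Subgroup.mem_map_of_mem _ (by rw [hS2c]; trivial)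
    rwa [MonoidHom.map_closure] at this
  have : ((a, f) : Multiplicative (Fin n → ℤ) × FreeGroup (Fin m)) = (a, 1) * (1, f) := by
    simp
  rw [this]
  exact mul_mem
    (Subgroup.closure_mono Set.subset_union_left ha)
    (Subgroup.closure_mono Set.subset_union_right hf)

/-- Key structure theorem: a finite-index subgroup of `ℤ^n × F_m` is isomorphic to some
`ℤ^{n'} × F_{m'}`. -/
theorem aux_main (n m : ℕ)
    (K : Subgroup (Multiplicative (Fin n → ℤ) × FreeGroup (Fin m))) (hK : K.FiniteIndex) :
    ∃ n' m', Nonempty (K ≃* Multiplicative (Fin n' → ℤ) × FreeGroup (Fin m')) := by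
  classical
  set A := Multiplicative (Fin n → ℤ) with hA
  set F := FreeGroup (Fin m) with hF
  haveI : Group.FG (A × F) := aux_fg_prod n m
  haveI : K.FiniteIndex := hK
  haveI : Group.FG K := Subgroup.fg_of_index_ne_zero K
  let π : K →* F := (MonoidHom.snd A F).comp K.subtype
  let Q : Subgroup F := π.range
  haveI : IsFreeGroup Q := inferInstance
  haveI : Group.FG Q :=
    Group.fg_of_surjective (f := π.rangeRestrict) π.rangeRestrict_surjective
  -- a section of the projection
  let f : IsFreeGroup.Generators Q → K :=
    fun g => (π.rangeRestrict_surjective (IsFreeGroup.of g)).choose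
  have hfspec : ∀ g, π.rangeRestrict (f g) = IsFreeGroup.of g :=
    fun g => (π.rangeRestrict_surjective (IsFreeGroup.of g)).choose_spec
  let s : Q →* K := IsFreeGroup.lift f
  have hsec : ∀ q : Q, π.rangeRestrict (s q) = q := by
    have : π.rangeRestrict.comp s = MonoidHom.id Q := by
      apply IsFreeGroup.ext_hom
      intro g
      simp only [MonoidHom.comp_apply, MonoidHom.id_apply]
      rw [show s (IsFreeGroup.of g) = f g from IsFreeGroup.lift_of f g]
      exact hfspec g
    intro q
    exact DFunLike.congr_fun this q
  have hsec' : ∀ q : Q, π (s q) = (q : F) := by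
    intro q
    have := hsec q
    exact congrArg Subtype.val this
  -- the central kernel part
  let C : Subgroup A := K.comap (MonoidHom.inl A F)
  let ιC : C →* K :=
    { toFun := fun c => ⟨((c : A), 1), c.2⟩
      map_one' := rfl
      map_mul' := fun c c' => by
        apply Subtype.ext
        simp [Prod.mk_mul_mk] }
  have hcomm : ∀ (c : C) (q : Q), Commute (ιC c) (s q) := by
    intro c q
    apply Subtype.ext
    obtain ⟨⟨x, y⟩, hxy⟩ := s q
    show (((c : A), 1) * (x, y) : A × F) = (x, y) * ((c : A), 1)
    simp [Prod.mk_mul_mk, mul_comm, mul_one, one_mul]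
  let φ : C × Q →* K := MonoidHom.noncommCoprod ιC s hcomm
  have hφ1 : ∀ (c : C) (q : Q), φ (c, q) = ιC c * s q := fun c q => rfl
  have hπι : ∀ c : C, π (ιC c) = 1 := fun c => rfl
  have hinj : Function.Injective φ := by
    rw [injective_iff_map_eq_one]
    rintro ⟨c, q⟩ h
    rw [hφ1] at h
    have hq : q = 1 := by
      have := congrArg π h
      rw [map_mul, hπι, one_mul, hsec', map_one] at this
      exact Subtype.ext this
    rw [hq, map_one, mul_one] at h
    have hc : c = 1 := by
      have := congrArg (fun k : K => ((k : A × F)).1) h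
      exact Subtype.ext this
    rw [hq, hc]
    rfl
  have hsurj : Function.Surjective φ := by
    intro k
    let q : Q := π.rangeRestrict k
    have hq : π (s q) = π k := by rw [hsec' q]; rfl
    let k' : K := k * (s q)⁻¹
    have hk' : π k' = 1 := by
      rw [map_mul, map_inv, hq, mul_inv_cancel]
    have hk'2 : ((k' : A × F)).2 = 1 := hk'
    have hmem : ((((k' : A × F)).1, (1 : F)) : A × F) ∈ K := by
      have : ((k' : A × F)) = (((k' : A × F)).1, (1 : F)) := by
        rw [← hk'2]
      rw [← this]
      exact k'.2
    refine ⟨(⟨((k' : A × F)).1, hmem⟩, q), ?_⟩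
    rw [hφ1]
    have : ιC ⟨((k' : A × F)).1, hmem⟩ = k' := by
      apply Subtype.ext
      show ((((k' : A × F)).1, (1 : F)) : A × F) = (k' : A × F)
      rw [← hk'2]
    rw [this]
    show k * (s q)⁻¹ * s q = k
    group
  let eK : C × Q ≃* K := MulEquiv.ofBijective φ ⟨hinj, hsurj⟩
  obtain ⟨n', ⟨eC⟩⟩ := aux_subgroup_zn_iso n C
  obtain ⟨m', ⟨eQ⟩⟩ := aux_fg_free_iso Q
  exact ⟨n', m', ⟨eK.symm.trans (MulEquiv.prodCongr eC eQ)⟩⟩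

/-- If a group `G` contains a finite-index subgroup `H` isomorphic to `ℤ^n × F_m`, then `G`
contains a finite-index *normal* subgroup `H'` isomorphic to `ℤ^{n'} × F_{m'}` for some
natural numbers `n'`, `m'`. -/
theorem exists_normal_finiteIndex_ZnxFm {G : Type} [Group G] (n m : ℕ)
    (H : Subgroup G) (hfin : H.FiniteIndex)
    (hiso : Nonempty (H ≃* Multiplicative (Fin n → ℤ) × FreeGroup (Fin m))) :
    ∃ (H' : Subgroup G) (n' m' : ℕ), H'.Normal ∧ H'.FiniteIndex ∧
      Nonempty (H' ≃* Multiplicative (Fin n' → ℤ) × FreeGroup (Fin m')) := by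
  classical
  obtain ⟨e⟩ := hiso
  haveI := hfin
  set N := H.normalCore with hN
  haveI hNfin : N.FiniteIndex := Subgroup.finiteIndex_normalCore H
  have hle : N ≤ H := H.normalCore_le
  let K₀ : Subgroup H := N.subgroupOf H
  have e1 : (N : Subgroup G) ≃* K₀ := (Subgroup.subgroupOfEquivOfLe hle).symm
  let K : Subgroup (Multiplicative (Fin n → ℤ) × FreeGroup (Fin m)) :=
    K₀.map e.toMonoidHom
  have e2 : K₀ ≃* K := e.subgroupMap K₀
  have hK0 : K₀.index ≠ 0 := by
    have hrel : N.relIndex H * H.index = N.index := Subgroup.relIndex_mul_index hle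
    have : N.relIndex H ≠ 0 := by
      intro h
      rw [h, zero_mul] at hrel
      exact hNfin.index_ne_zero hrel.symm
    exact this
  have hKfin : K.FiniteIndex := by
    constructor
    rw [Subgroup.index_map_of_injective K₀ e.injective,
      MonoidHom.range_eq_top_of_surjective _ e.surjective, Subgroup.index_top, mul_one]
    exact hK0
  obtain ⟨n', m', ⟨e3⟩⟩ := aux_main n m K hKfin
  exact ⟨N, n', m', H.normalCore_normal, hNfin, ⟨(e1.trans e2).trans e3⟩⟩
end

section
/- Let R ⊆ Σ* be a regular language over an alphabet Σ = {a_1,...,a_n}, and let f(x_1,...,x_n,z) = Σ_{k_1,...,k_n ∈ ℕ} c(k_1,...,k_n) x_1^{k_1}···x_n^{k_n} z^{k_1+···+k_n}, where c(k_1,...,k_n) is the number of words in R that contain exactly k_i occurrences of the letter a_i for each i. Then f(x_1,...,x_n,z) is an ℕ-rational power series. -/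
/-- The class of ℕ-rational multivariate power series: the smallest class of power series in
`ℕ[[x]]` containing the polynomials and closed under addition, multiplication and
quasi-inverse `h ↦ 1/(1-h)` (for `h` with zero constant term, `g = 1/(1-h)` is the unique
series with `g = 1 + h * g`). -/
inductive MvPowerSeries.IsNRational {σ : Type} : MvPowerSeries σ ℕ → Prop
  | poly (P : MvPolynomial σ ℕ) : MvPowerSeries.IsNRational (P : MvPowerSeries σ ℕ)
  | add {f g : MvPowerSeries σ ℕ} : MvPowerSeries.IsNRational f →
      MvPowerSeries.IsNRational g → MvPowerSeries.IsNRational (f + g)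
  | mul {f g : MvPowerSeries σ ℕ} : MvPowerSeries.IsNRational f →
      MvPowerSeries.IsNRational g → MvPowerSeries.IsNRational (f * g)
  | quasiInv {h g : MvPowerSeries σ ℕ} : MvPowerSeries.IsNRational h →
      MvPowerSeries.constantCoeff (σ := σ) (R := ℕ) h = 0 → g = 1 + h * g →
      MvPowerSeries.IsNRational g

/-- The multivariate generating function of a language `R` over the alphabet `Fin n`, in
variables `x_1, …, x_n` (indexed by `some i`) and `z` (indexed by `none`): the coefficient of
`x_1^{k_1} ⋯ x_n^{k_n} z^ℓ` counts the words of `R` of length `ℓ` containing exactly `k_i`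
occurrences of the letter `i` for each `i`. -/
noncomputable def langGenFun (n : ℕ) (R : Language (Fin n)) :
    MvPowerSeries (Option (Fin n)) ℕ :=
  fun d => Nat.card {w : List (Fin n) //
    w ∈ R ∧ (∀ i : Fin n, w.count i = d (some i)) ∧ w.length = d none}


open MvPowerSeries

namespace LangGF

variable {n : ℕ}

/-- weight of a word: counts of each letter and total length, as a Finsupp. -/
noncomputable def wt (w : List (Fin n)) : Option (Fin n) →₀ ℕ :=
  Finsupp.equivFunOnFinite.symm (fun o => o.elim w.length (fun i => w.count i))

@[simp] lemma wt_apply (w : List (Fin n)) (o : Option (Fin n)) :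
    wt w o = o.elim w.length (fun i => w.count i) := rfl

lemma wt_nil : wt ([] : List (Fin n)) = 0 := by
  ext o; cases o <;> simp

lemma wt_append (u v : List (Fin n)) : wt (u ++ v) = wt u + wt v := by
  ext o; cases o <;> simp [List.count_append]

lemma eq_nil_of_wt_eq_zero {w : List (Fin n)} (h : wt w = 0) : w = [] := by
  have := congrArg (fun f => f none) h
  simpa [List.length_eq_zero_iff] using this

/-- the generating series of a language -/
noncomputable def ser (A : Language (Fin n)) : MvPowerSeries (Option (Fin n)) ℕ :=
  fun d => Set.ncard {w | w ∈ A ∧ wt w = d}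

lemma coeff_ser (A : Language (Fin n)) (d : Option (Fin n) →₀ ℕ) :
    MvPowerSeries.coeff d (ser A) = Set.ncard {w | w ∈ A ∧ wt w = d} := rfl

lemma finite_wt_eq (d : Option (Fin n) →₀ ℕ) : {w : List (Fin n) | wt w = d}.Finite := by
  apply (List.finite_length_eq (Fin n) (d none)).subset
  intro w hw
  simp only [Set.mem_setOf_eq] at hw ⊢
  rw [← hw]; simp

lemma finite_serSet (A : Language (Fin n)) (d : Option (Fin n) →₀ ℕ) :
    {w | w ∈ A ∧ wt w = d}.Finite :=
  (finite_wt_eq d).subset (fun _ h => h.2)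

lemma ser_union (A B : Language (Fin n)) (h : Disjoint A B) :
    ser (A + B) = ser A + ser B := by
  funext d
  have : {w | w ∈ A + B ∧ wt w = d} =
      {w | w ∈ A ∧ wt w = d} ∪ {w | w ∈ B ∧ wt w = d} := by
    ext w; simp only [Set.mem_setOf_eq, Set.mem_union, Language.mem_add]; tauto
  show Set.ncard _ = Set.ncard _ + Set.ncard _
  rw [this, Set.ncard_union_eq _ (finite_serSet A d) (finite_serSet B d)]
  exact Set.disjoint_left.mpr (fun w hw hw' =>
    Set.disjoint_left.mp h hw.1 hw'.1)

lemma ser_one : ser (1 : Language (Fin n)) = 1 := by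
  classical
  funext d
  show Set.ncard _ = MvPowerSeries.coeff d 1
  rw [MvPowerSeries.coeff_one]
  by_cases hd : d = 0
  · subst hd
    have h1 : {w : List (Fin n) | w ∈ (1 : Language (Fin n)) ∧ wt w = 0} = {[]} := by
      ext w
      simp only [Set.mem_setOf_eq, Language.mem_one, Set.mem_singleton_iff]
      constructor
      · rintro ⟨rfl, -⟩; rfl
      · rintro rfl; exact ⟨rfl, wt_nil⟩
    rw [h1, if_pos rfl, Set.ncard_singleton]
  · have h1 : {w : List (Fin n) | w ∈ (1 : Language (Fin n)) ∧ wt w = d} = ∅ := by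
      ext w
      simp only [Set.mem_setOf_eq, Language.mem_one, Set.mem_empty_iff_false, iff_false]
      rintro ⟨rfl, hw⟩; rw [wt_nil] at hw; exact hd hw.symm
    rw [h1, if_neg hd, Set.ncard_empty]

end LangGF

namespace LangGF

variable {n : ℕ}

/-- Finset of words of `A` of weight `d`. -/
noncomputable def serFinset (A : Language (Fin n)) (d : Option (Fin n) →₀ ℕ) :
    Finset (List (Fin n)) := (finite_serSet A d).toFinset

lemma mem_serFinset {A : Language (Fin n)} {d} {w : List (Fin n)} :
    w ∈ serFinset A d ↔ w ∈ A ∧ wt w = d := by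
  simp [serFinset]

lemma ser_apply' (A : Language (Fin n)) (d) : ser A d = (serFinset A d).card := by
  show Set.ncard _ = _
  rw [Set.ncard_eq_toFinset_card _ (finite_serSet A d)]
  rfl

lemma ser_mul (A B : Language (Fin n))
    (h : ∀ a ∈ A, ∀ b ∈ B, ∀ a' ∈ A, ∀ b' ∈ B, a ++ b = a' ++ b' → a = a') :
    ser (A * B) = ser A * ser B := by
  classical
  funext d
  show ser (A * B) d = MvPowerSeries.coeff d (ser A * ser B)
  rw [MvPowerSeries.coeff_mul]
  have key : serFinset (A * B) d =
      (Finset.HasAntidiagonal.antidiagonal d).biUnion (fun p =>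
        (serFinset A p.1 ×ˢ serFinset B p.2).image (fun ab => ab.1 ++ ab.2)) := by
    ext w
    simp only [mem_serFinset, Finset.mem_biUnion, Finset.mem_image, Finset.mem_product,
      Finset.HasAntidiagonal.mem_antidiagonal, Prod.exists]
    constructor
    · rintro ⟨hw, rfl⟩
      obtain ⟨a, ha, b, hb, rfl⟩ := Language.mem_mul.mp hw
      exact ⟨wt a, wt b, (wt_append a b).symm, a, b,
        ⟨⟨ha, rfl⟩, hb, rfl⟩, rfl⟩
    · rintro ⟨u, v, huv, a, b, ⟨⟨ha, rfl⟩, hb, rfl⟩, rfl⟩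
      exact ⟨Language.mem_mul.mpr ⟨a, ha, b, hb, rfl⟩, by rw [wt_append, huv]⟩
  rw [ser_apply', key, Finset.card_biUnion]
  · apply Finset.sum_congr rfl
    intro p hp
    show _ = ser A p.1 * ser B p.2
    rw [Finset.card_image_of_injOn, Finset.card_product, ser_apply', ser_apply']
    rintro ⟨a, b⟩ hab ⟨a', b'⟩ hab' heq
    simp only [Finset.mem_coe, Finset.mem_product, mem_serFinset] at hab hab'
    have ha := h a hab.1.1 b hab.2.1 a' hab'.1.1 b' hab'.2.1 heq
    subst ha
    obtain rfl := List.append_cancel_left heq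
    rfl
  · rintro ⟨u, v⟩ hp ⟨u', v'⟩ hq hne
    simp only [Finset.disjoint_left, Finset.mem_image, Finset.mem_product, Prod.exists]
    rintro w ⟨a, b, ⟨ha, hb⟩, rfl⟩ ⟨a', b', ⟨ha', hb'⟩, heq⟩
    rw [mem_serFinset] at ha hb ha' hb'
    have := h a' ha'.1 b' hb'.1 a ha.1 b hb.1 heq
    subst this
    obtain rfl := List.append_cancel_left heq
    exact hne (by rw [← ha.2, ← hb.2, ← ha'.2, ← hb'.2])

/-- the series of a finite language is a polynomial, hence rational. -/
lemma ser_finite_isNRational {A : Language (Fin n)} (hA : (A : Set (List (Fin n))).Finite) :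
    (ser A).IsNRational := by
  classical
  have h : ser A = (((∑ w ∈ hA.toFinset, MvPolynomial.monomial (wt w) (1 : ℕ)) :
      MvPolynomial (Option (Fin n)) ℕ) : MvPowerSeries (Option (Fin n)) ℕ) := by
    funext d
    have h1 : (ser A) d = ((hA.toFinset.filter (fun w => wt w = d)).card : ℕ) := by
      show Set.ncard _ = _
      have : {w | w ∈ A ∧ wt w = d} = ↑(hA.toFinset.filter (fun w => wt w = d)) := by
        ext w; simp; exact fun _ => (hA.mem_toFinset).symm
      rw [this, Set.ncard_coe_finset]
    have h2 : (((∑ w ∈ hA.toFinset, MvPolynomial.monomial (wt w) (1 : ℕ)) :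
        MvPolynomial (Option (Fin n)) ℕ) : MvPowerSeries (Option (Fin n)) ℕ) d
        = ∑ w ∈ hA.toFinset, if wt w = d then 1 else 0 := by
      show MvPolynomial.coeff d _ = _
      rw [MvPolynomial.coeff_sum]
      exact Finset.sum_congr rfl fun w _ => MvPolynomial.coeff_monomial _ _ _
    rw [h1, h2, Finset.sum_boole]
    simp
  rw [h]
  exact MvPowerSeries.IsNRational.poly _

end LangGF

namespace LangGF

variable {n : ℕ} {σ : Type} (M : DFA (Fin n) σ)

/-- nonempty words driving the DFA from `p` to `q` with all strictly intermediate
states in `S`. -/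
def Paths (S : Set σ) (p q : σ) : Language (Fin n) :=
  {w | w ≠ [] ∧ M.evalFrom p w = q ∧
    ∀ j, 0 < j → j < w.length → M.evalFrom p (w.take j) ∈ S}

/-- words driving the DFA from `s` back to `s`, with all strictly intermediate states in
`insert s S`. -/
def Chain (S : Set σ) (s : σ) : Language (Fin n) :=
  {w | M.evalFrom s w = s ∧
    ∀ j, 0 < j → j < w.length → M.evalFrom s (w.take j) ∈ insert s S}

lemma mem_paths {S : Set σ} {p q : σ} {w : List (Fin n)} :
    w ∈ Paths M S p q ↔ w ≠ [] ∧ M.evalFrom p w = q ∧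
      ∀ j, 0 < j → j < w.length → M.evalFrom p (w.take j) ∈ S := Iff.rfl

lemma mem_chain {S : Set σ} {s : σ} {w : List (Fin n)} :
    w ∈ Chain M S s ↔ M.evalFrom s w = s ∧
      ∀ j, 0 < j → j < w.length → M.evalFrom s (w.take j) ∈ insert s S := Iff.rfl

lemma nil_mem_chain (S : Set σ) (s : σ) : [] ∈ Chain M S s :=
  ⟨M.evalFrom_nil s, fun j hj hj' => by simp at hj'⟩

/-- words in `Paths` are nonempty, so have nonzero weight -/
lemma constantCoeff_ser_paths (S : Set σ) (p q : σ) :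
    MvPowerSeries.constantCoeff (σ := Option (Fin n)) (R := ℕ) (ser (Paths M S p q)) = 0 := by
  show Set.ncard _ = 0
  have : {w | w ∈ Paths M S p q ∧ wt w = 0} = ∅ := by
    ext w
    simp only [Set.mem_setOf_eq, Set.mem_empty_iff_false, iff_false, not_and]
    intro hw hwt
    exact hw.1 (eq_nil_of_wt_eq_zero hwt)
  rw [this, Set.ncard_empty]

/-- key cross lemma: in `u ++ v = u' ++ v'` with `|u| < |u'|`, the state reached after `u`
is an intermediate state of `u'`. -/
lemma no_cross {p : σ} {S : Set σ} {u v u' v' : List (Fin n)}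
    (h : u ++ v = u' ++ v') (hlt : u.length < u'.length) (hne : u ≠ [])
    (hint : ∀ j, 0 < j → j < u'.length → M.evalFrom p (u'.take j) ∈ S)
    (hval : M.evalFrom p u ∉ S) : False := by
  have h1 : u'.take u.length = u := by
    have e1 : (u' ++ v').take u.length = u'.take u.length :=
      List.take_append_of_le_length hlt.le
    rw [← h, List.take_left] at e1
    exact e1.symm
  have := hint u.length (List.length_pos_iff.mpr hne) hlt
  rw [h1] at this
  exact hval this

/-- second cross lemma, for the products `Chain * Paths`. -/
lemma no_cross2 {s q : σ} {S : Set σ} {v y v' y' : List (Fin n)}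
    (h : v ++ y = v' ++ y') (hlt : v.length < v'.length)
    (hv : M.evalFrom s v = s) (hv' : M.evalFrom s v' = s)
    (hy : y ∈ Paths M S s q) (hy' : y' ≠ []) (hs : s ∉ S) : False := by
  have hlen := congrArg List.length h
  simp only [List.length_append] at hlen
  have hy'pos : 0 < y'.length := List.length_pos_iff.mpr hy'
  set i := v'.length - v.length with hi_def
  have hi : v.length + i = v'.length := by omega
  have hipos : 0 < i := by omega
  have hiy : i < y.length := by omega
  have e3 : v ++ y.take i = v' := by
    have e1 : (v ++ y).take v'.length = v ++ y.take i := by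
      rw [← hi, List.take_length_add_append]
    rw [h, List.take_left] at e1
    exact e1.symm
  have heq : M.evalFrom s (y.take i) = s := by
    have := congrArg (M.evalFrom s) e3
    rw [DFA.evalFrom_of_append, hv] at this
    rw [this, hv']
  have hmem := hy.2.2 i hipos hiy
  rw [heq] at hmem
  exact hs hmem

end LangGF

namespace LangGF

variable {n : ℕ} {σ : Type} (M : DFA (Fin n) σ)

lemma chain_decomp {S : Set σ} {s : σ} :
    Chain M S s = 1 + Paths M S s s * Chain M S s := by
  classical
  ext w
  rw [Language.mem_add, Language.mem_one, Language.mem_mul]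
  constructor
  · intro hw
    rcases eq_or_ne w [] with rfl | hne
    · exact Or.inl rfl
    right
    have hlen : 0 < w.length := List.length_pos_iff.mpr hne
    have hex : ∃ j, 0 < j ∧ j ≤ w.length ∧ M.evalFrom s (w.take j) = s :=
      ⟨w.length, hlen, le_rfl, by rw [List.take_length]; exact hw.1⟩
    obtain ⟨hj₀pos, hj₀le, hj₀eq⟩ := Nat.find_spec hex
    set j₀ := Nat.find hex with hj₀_def
    have htl : (w.take j₀).length = j₀ := by
      rw [List.length_take]; omega
    refine ⟨w.take j₀, ⟨?_, hj₀eq, ?_⟩, w.drop j₀, ⟨?_, ?_⟩, List.take_append_drop _ _⟩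
    · intro hnil; rw [hnil] at htl; simp at htl; omega
    · intro i hi0 hilen
      rw [htl] at hilen
      rw [List.take_take, min_eq_left hilen.le]
      have hmem := hw.2 i hi0 (lt_of_lt_of_le hilen hj₀le)
      have hne_s : M.evalFrom s (w.take i) ≠ s := by
        intro hserr
        exact Nat.find_min hex hilen ⟨hi0, le_trans hilen.le hj₀le, hserr⟩
      rcases Set.mem_insert_iff.mp hmem with h | h
      · exact absurd h hne_s
      · exact h
    · have := M.evalFrom_of_append s (w.take j₀) (w.drop j₀)
      rw [List.take_append_drop, hj₀eq] at this
      rw [← this]; exact hw.1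
    · intro i hi0 hilen
      have hdl : (w.drop j₀).length = w.length - j₀ := List.length_drop
      have e1 : w.take (j₀ + i) = w.take j₀ ++ (w.drop j₀).take i := List.take_add
      have e2 : M.evalFrom s (w.take (j₀ + i)) = M.evalFrom s ((w.drop j₀).take i) := by
        rw [e1, DFA.evalFrom_of_append, hj₀eq]
      rw [← e2]
      exact hw.2 (j₀ + i) (by omega) (by omega)
  · rintro (rfl | ⟨u, hu, v, hv, rfl⟩)
    · exact nil_mem_chain M S s
    constructor
    · rw [DFA.evalFrom_of_append, hu.2.1]; exact hv.1
    · intro j hj0 hjlen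
      rw [List.length_append] at hjlen
      rcases lt_trichotomy j u.length with h | h | h
      · rw [List.take_append_of_le_length h.le]
        exact Set.mem_insert_of_mem _ (hu.2.2 j hj0 h)
      · rw [h, List.take_left, hu.2.1]
        exact Set.mem_insert _ _
      · have e1 : u.length + (j - u.length) = j := by omega
        rw [← e1, List.take_length_add_append, DFA.evalFrom_of_append, hu.2.1]
        exact hv.2 (j - u.length) (by omega) (by omega)

lemma chain_unamb {S : Set σ} {s : σ} (hs : s ∉ S) :
    ∀ a ∈ Paths M S s s, ∀ b ∈ Chain M S s, ∀ a' ∈ Paths M S s s, ∀ b' ∈ Chain M S s,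
      a ++ b = a' ++ b' → a = a' := by
  intro a ha b hb a' ha' b' hb' h
  rcases lt_trichotomy a.length a'.length with hlt | heq | hlt
  · exact absurd (no_cross M h hlt ha.1 ha'.2.2
      (fun hmem => hs (ha.2.1 ▸ hmem))) not_false
  · exact (List.append_inj h heq).1
  · exact absurd (no_cross M h.symm hlt ha'.1 ha.2.2
      (fun hmem => hs (ha'.2.1 ▸ hmem))) not_false

lemma ser_chain_eq {S : Set σ} {s : σ} (hs : s ∉ S) :
    ser (Chain M S s) = 1 + ser (Paths M S s s) * ser (Chain M S s) := by
  have hdisj : Disjoint (1 : Language (Fin n)) (Paths M S s s * Chain M S s) := by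
    apply Set.disjoint_left.mpr
    intro w hw hw'
    replace hw : w = [] := (Language.mem_one w).mp hw
    obtain ⟨a, ha, b, hb, habw⟩ := Language.mem_mul.mp hw'
    subst hw
    exact ha.1 (List.append_eq_nil_iff.mp habw).1
  conv_lhs => rw [chain_decomp M]
  rw [ser_union _ _ hdisj, ser_one, ser_mul _ _ (chain_unamb M hs)]

lemma paths_decomp {S : Set σ} {s : σ} (p q : σ) :
    Paths M (insert s S) p q =
      Paths M S p q + Paths M S p s * (Chain M S s * Paths M S s q) := by
  classical
  ext w
  rw [Language.mem_add, Language.mem_mul]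
  constructor
  · rintro ⟨hne, heval, hint⟩
    by_cases hcase : ∀ j, 0 < j → j < w.length → M.evalFrom p (w.take j) ≠ s
    · exact Or.inl ⟨hne, heval, fun j h1 h2 =>
        (Set.mem_insert_iff.mp (hint j h1 h2)).resolve_left (hcase j h1 h2)⟩
    right
    push_neg at hcase
    obtain ⟨j, hj0, hjlen, hjeq⟩ := hcase
    have hex : ∃ j, 0 < j ∧ j < w.length ∧ M.evalFrom p (w.take j) = s := ⟨j, hj0, hjlen, hjeq⟩
    obtain ⟨hj₀pos, hj₀lt, hj₀eq⟩ := Nat.find_spec hex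
    set j₀ := Nat.find hex with hj₀_def
    set u := w.take j₀ with hu_def
    set r := w.drop j₀ with hr_def
    have htl : u.length = j₀ := by rw [hu_def, List.length_take]; omega
    have hrl : r.length = w.length - j₀ := List.length_drop
    have hrpos : 0 < r.length := by omega
    have hu : u ∈ Paths M S p s := by
      refine ⟨fun hnil => by rw [hnil] at htl; simp at htl; omega, hj₀eq, ?_⟩
      intro i hi0 hilen
      rw [htl] at hilen
      rw [hu_def, List.take_take, min_eq_left hilen.le]
      have hmem := hint i hi0 (by omega)
      have hne_s : M.evalFrom p (w.take i) ≠ s := fun hserr =>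
        Nat.find_min hex hilen ⟨hi0, by omega, hserr⟩
      exact (Set.mem_insert_iff.mp hmem).resolve_left hne_s
    have hur : u ++ r = w := List.take_append_drop _ _
    have heval_u : M.evalFrom p u = s := hj₀eq
    have heval_r : ∀ i, M.evalFrom p (w.take (j₀ + i)) = M.evalFrom s (r.take i) := by
      intro i
      rw [List.take_add, ← hu_def, ← hr_def, DFA.evalFrom_of_append, heval_u]
    have heval_rq : M.evalFrom s r = q := by
      have := M.evalFrom_of_append p u r
      rw [hur, heval_u] at this
      rw [← this, heval]
    set P : ℕ → Prop := fun k => M.evalFrom s (r.take k) = s with hP_def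
    have hP0 : P 0 := by simp [hP_def, DFA.evalFrom_nil]
    set k₀ := Nat.findGreatest P (r.length - 1) with hk₀_def
    have hPk₀ : P k₀ := Nat.findGreatest_spec (Nat.zero_le _) hP0
    have hk₀le : k₀ ≤ r.length - 1 := by rw [hk₀_def]; exact Nat.findGreatest_le _
    set v := r.take k₀ with hv_def
    set y := r.drop k₀ with hy_def
    have hvl : v.length = k₀ := by rw [hv_def, List.length_take]; omega
    have hyl : y.length = r.length - k₀ := List.length_drop
    have hvy : v ++ y = r := List.take_append_drop _ _
    have heval_y : ∀ i, M.evalFrom s (r.take (k₀ + i)) = M.evalFrom s (y.take i) := by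
      intro i
      rw [List.take_add, ← hv_def, ← hy_def, DFA.evalFrom_of_append, hPk₀]
    refine ⟨u, hu, v ++ y, ?_, by rw [hvy, hur]⟩
    refine Language.mem_mul.mpr ⟨v, ⟨hPk₀, ?_⟩, y, ⟨?_, ?_, ?_⟩, rfl⟩
    · intro i hi0 hilen
      rw [hvl] at hilen
      rw [hv_def, List.take_take, min_eq_left hilen.le]
      rw [← heval_r i]
      exact hint (j₀ + i) (by omega) (by omega)
    · intro hnil
      rw [hnil] at hyl; simp at hyl; omega
    · have := M.evalFrom_of_append s v y
      rw [hvy, hPk₀] at this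
      rw [← this, heval_rq]
    · intro i hi0 hilen
      rw [hyl] at hilen
      have e1 : y.take i = (r.take (k₀ + i)).drop k₀ := by
        rw [List.take_add]
        rw [← hv_def, ← hy_def]
        rw [List.drop_left' hvl]
      have e2 : M.evalFrom s (y.take i) = M.evalFrom p (w.take (j₀ + (k₀ + i))) := by
        rw [← heval_y i, heval_r]
      have hmem : M.evalFrom s (y.take i) ∈ insert s S := by
        rw [e2]
        exact hint (j₀ + (k₀ + i)) (by omega) (by omega)
      have hne_s : M.evalFrom s (y.take i) ≠ s := by
        intro hserr
        have hPki : P (k₀ + i) := by rw [hP_def]; simp only; rw [heval_y i]; exact hserr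
        exact Nat.findGreatest_is_greatest (n := r.length - 1) (k := k₀ + i)
          (by omega) (by omega) hPki
      exact (Set.mem_insert_iff.mp hmem).resolve_left hne_s
  · rintro (⟨hne, heval, hint⟩ | ⟨u, hu, z, hz, rfl⟩)
    · exact ⟨hne, heval, fun j h1 h2 => Set.mem_insert_of_mem _ (hint j h1 h2)⟩
    obtain ⟨v, hv, y, hy, rfl⟩ := Language.mem_mul.mp hz
    have hupos : 0 < u.length := List.length_pos_iff.mpr hu.1
    have hypos : 0 < y.length := List.length_pos_iff.mpr hy.1
    refine ⟨?_, ?_, ?_⟩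
    · intro hnil
      simp only [List.append_eq_nil_iff] at hnil
      exact hu.1 hnil.1
    · rw [DFA.evalFrom_of_append, hu.2.1, DFA.evalFrom_of_append, hv.1, hy.2.1]
    · intro j hj0 hjlen
      simp only [List.length_append] at hjlen
      rcases lt_trichotomy j u.length with h | h | h
      · rw [List.take_append_of_le_length h.le]
        exact Set.mem_insert_of_mem _ (hu.2.2 j hj0 h)
      · rw [h, List.take_left, hu.2.1]; exact Set.mem_insert _ _
      · have e1 : u.length + (j - u.length) = j := by omega
        rw [← e1, List.take_length_add_append, DFA.evalFrom_of_append, hu.2.1]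
        set i := j - u.length with hi_def
        have hipos : 0 < i := by omega
        rcases lt_trichotomy i v.length with h2 | h2 | h2
        · rw [List.take_append_of_le_length h2.le]
          exact hv.2 i hipos h2
        · rw [h2, List.take_left, hv.1]; exact Set.mem_insert _ _
        · have e2 : v.length + (i - v.length) = i := by omega
          rw [← e2, List.take_length_add_append, DFA.evalFrom_of_append, hv.1]
          exact Set.mem_insert_of_mem _ (hy.2.2 (i - v.length) (by omega) (by omega))

lemma paths_disjoint {S : Set σ} {s : σ} (hs : s ∉ S) (p q : σ) :
    Disjoint (Paths M S p q) (Paths M S p s * (Chain M S s * Paths M S s q)) := by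
  apply Set.disjoint_left.mpr
  rintro w ⟨hne, heval, hint⟩ hw'
  obtain ⟨u, hu, z, hz, hwz⟩ := Language.mem_mul.mp hw'
  obtain ⟨v, hv, y, hy, rfl⟩ := Language.mem_mul.mp hz
  have hupos : 0 < u.length := List.length_pos_iff.mpr hu.1
  have hypos : 0 < y.length := List.length_pos_iff.mpr hy.1
  have hulen : u.length < w.length := by
    have := congrArg List.length hwz
    simp only [List.length_append] at this
    omega
  have e1 : w.take u.length = u := by
    rw [← hwz, List.take_left]
  have := hint u.length hupos hulen
  rw [e1, hu.2.1] at this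
  exact hs this

lemma paths_unamb_outer {S : Set σ} {s : σ} (hs : s ∉ S) (p q : σ) :
    ∀ a ∈ Paths M S p s, ∀ b ∈ Chain M S s * Paths M S s q,
    ∀ a' ∈ Paths M S p s, ∀ b' ∈ Chain M S s * Paths M S s q,
      a ++ b = a' ++ b' → a = a' := by
  intro a ha b _ a' ha' b' _ h
  rcases lt_trichotomy a.length a'.length with hlt | heq | hlt
  · exact absurd (no_cross M h hlt ha.1 ha'.2.2
      (fun hmem => hs (ha.2.1 ▸ hmem))) not_false
  · exact (List.append_inj h heq).1
  · exact absurd (no_cross M h.symm hlt ha'.1 ha.2.2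
      (fun hmem => hs (ha'.2.1 ▸ hmem))) not_false

lemma paths_unamb_inner {S : Set σ} {s q : σ} (hs : s ∉ S) :
    ∀ a ∈ Chain M S s, ∀ b ∈ Paths M S s q,
    ∀ a' ∈ Chain M S s, ∀ b' ∈ Paths M S s q,
      a ++ b = a' ++ b' → a = a' := by
  intro v hv y hy v' hv' y' hy' h
  rcases lt_trichotomy v.length v'.length with hlt | heq | hlt
  · exact absurd (no_cross2 M h hlt hv.1 hv'.1 hy hy'.1 hs) not_false
  · exact (List.append_inj h heq).1
  · exact absurd (no_cross2 M h.symm hlt hv'.1 hv.1 hy' hy.1 hs) not_false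

lemma ser_paths_insert {S : Set σ} {s : σ} (hs : s ∉ S) (p q : σ) :
    ser (Paths M (insert s S) p q) = ser (Paths M S p q) +
      ser (Paths M S p s) * (ser (Chain M S s) * ser (Paths M S s q)) := by
  rw [paths_decomp M p q, ser_union _ _ (paths_disjoint M hs p q),
    ser_mul _ _ (paths_unamb_outer M hs p q), ser_mul _ _ (paths_unamb_inner M hs)]

end LangGF

namespace LangGF

variable {n : ℕ} {σ : Type} (M : DFA (Fin n) σ)

lemma ser_zero : ser (0 : Language (Fin n)) = 0 := by
  funext d
  show Set.ncard _ = 0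
  have : {w : List (Fin n) | w ∈ (0 : Language (Fin n)) ∧ wt w = d} = ∅ := by
    ext w
    simp only [Set.mem_setOf_eq, Set.mem_empty_iff_false, iff_false, not_and]
    intro hw
    exact absurd hw (Language.notMem_zero w)
  rw [this, Set.ncard_empty]

lemma mem_langSum {ι : Type*} (t : Finset ι) (f : ι → Language (Fin n)) (w : List (Fin n)) :
    w ∈ ∑ i ∈ t, f i ↔ ∃ i ∈ t, w ∈ f i := by
  classical
  induction t using Finset.induction_on with
  | empty => simp [Language.notMem_zero]
  | insert _ _ ha ih =>
    rw [Finset.sum_insert ha, Language.mem_add, ih]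
    simp

lemma ser_sum {ι : Type*} (t : Finset ι) (f : ι → Language (Fin n))
    (h : ∀ i ∈ t, ∀ j ∈ t, i ≠ j → Disjoint (f i) (f j)) :
    ser (∑ i ∈ t, f i) = ∑ i ∈ t, ser (f i) := by
  classical
  induction t using Finset.induction_on with
  | empty => simp [ser_zero]
  | @insert a t ha ih =>
    rw [Finset.sum_insert ha, Finset.sum_insert ha,
      ser_union _ _ ?_, ih (fun i hi j hj hij =>
        h i (Finset.mem_insert_of_mem hi) j (Finset.mem_insert_of_mem hj) hij)]
    apply Set.disjoint_left.mpr
    intro w hw hw'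
    obtain ⟨i, hi, hwi⟩ := (mem_langSum t f w).mp hw'
    exact Set.disjoint_left.mp
      (h a (Finset.mem_insert_self a t) i (Finset.mem_insert_of_mem hi)
        (fun hai => ha (hai ▸ hi))) hw hwi

lemma isNRational_ser_paths [Fintype σ] (S : Finset σ) (p q : σ) :
    (ser (Paths M ↑S p q)).IsNRational := by
  classical
  induction S using Finset.induction_on generalizing p q with
  | empty =>
    apply ser_finite_isNRational
    apply (List.finite_length_eq (Fin n) 1).subset
    rintro w ⟨hne, heval, hint⟩
    have hpos : 0 < w.length := List.length_pos_iff.mpr hne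
    by_contra hlen
    have h2 : 2 ≤ w.length := by
      simp only [Set.mem_setOf_eq] at hlen
      omega
    have := hint 1 one_pos (by omega)
    simp only [Finset.coe_empty, Set.mem_empty_iff_false] at this
  | @insert s S hs ih =>
    have hs' : s ∉ (↑S : Set σ) := by exact_mod_cast hs
    have hC : (ser (Chain M ↑S s)).IsNRational :=
      MvPowerSeries.IsNRational.quasiInv (ih s s) (constantCoeff_ser_paths M ↑S s s)
        (ser_chain_eq M hs')
    rw [Finset.coe_insert, ser_paths_insert M hs' p q]
    exact MvPowerSeries.IsNRational.add (ih p q)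
      (MvPowerSeries.IsNRational.mul (ih p s)
        (MvPowerSeries.IsNRational.mul hC (ih s q)))

end LangGF

open LangGF in
theorem langGenFun_isNRational' (n : ℕ) (R : Language (Fin n)) (hR : R.IsRegular) :
    (langGenFun n R).IsNRational := by
  classical
  obtain ⟨σ, fσ, M, hM⟩ := hR
  have hser : langGenFun n R = ser R := by
    funext d
    show Nat.card _ = Set.ncard _
    rw [← Nat.card_coe_set_eq]
    apply Nat.card_congr
    apply Equiv.subtypeEquivRight
    intro w
    simp only [Set.mem_setOf_eq]
    apply and_congr_right
    intro _
    rw [Finsupp.ext_iff]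
    constructor
    · rintro ⟨hc, hl⟩ o
      cases o with
      | none => simpa using hl
      | some i => simpa using hc i
    · intro h
      exact ⟨fun i => by simpa using h (some i), by simpa using h none⟩
  rw [hser, ← hM]
  -- split the accepted language into the empty word and nonempty words by final state
  set A₀ : Language (Fin n) := {w | w ∈ M.accepts ∧ w = []} with hA₀
  set T : Finset σ := Finset.univ.filter (· ∈ M.accept) with hT
  have hdec : M.accepts = A₀ + ∑ q ∈ T, Paths M Set.univ M.start q := by
    ext w
    rw [Language.mem_add, mem_langSum]
    constructor
    · intro hw
      rcases eq_or_ne w [] with rfl | hne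
      · exact Or.inl ⟨hw, rfl⟩
      · refine Or.inr ⟨M.evalFrom M.start w, ?_, hne, rfl, fun j _ _ => Set.mem_univ _⟩
        rw [hT, Finset.mem_filter]
        exact ⟨Finset.mem_univ _, (DFA.mem_accepts M).mp hw⟩
    · rintro (⟨hw, -⟩ | ⟨q, hq, hne, heval, -⟩)
      · exact hw
      · rw [DFA.mem_accepts]
        rw [hT, Finset.mem_filter] at hq
        show M.evalFrom M.start w ∈ M.accept
        rw [heval]
        exact hq.2
  have hdisj : Disjoint A₀ (∑ q ∈ T, Paths M Set.univ M.start q) := by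
    apply Set.disjoint_left.mpr
    rintro w ⟨-, rfl⟩ hw'
    obtain ⟨q, -, hne, -, -⟩ := (mem_langSum T _ []).mp hw'
    exact hne rfl
  rw [hdec, ser_union _ _ hdisj, ser_sum T _ ?_]
  · apply MvPowerSeries.IsNRational.add
    · apply ser_finite_isNRational
      apply (Set.finite_singleton ([] : List (Fin n))).subset
      rintro w ⟨-, rfl⟩
      rfl
    · apply Finset.sum_induction _ _ (fun a b => MvPowerSeries.IsNRational.add)
      · have : (0 : MvPowerSeries (Option (Fin n)) ℕ) =
            ((0 : MvPolynomial (Option (Fin n)) ℕ) : MvPowerSeries (Option (Fin n)) ℕ) := by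
          push_cast
          rfl
        rw [this]
        exact MvPowerSeries.IsNRational.poly _
      · intro q _
        have : (Set.univ : Set σ) = ↑(Finset.univ : Finset σ) := by simp
        rw [this]
        exact isNRational_ser_paths M Finset.univ M.start q
  · intro i _ j _ hij
    apply Set.disjoint_left.mpr
    rintro w ⟨-, heval, -⟩ ⟨-, heval', -⟩
    exact hij (heval ▸ heval')

/-- The multivariate generating function of a regular language, counting the occurrences of
each letter together with the total length, is ℕ-rational. -/
theorem langGenFun_isNRational (n : ℕ) (R : Language (Fin n)) (hR : R.IsRegular) :
    (langGenFun n R).IsNRational := by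
  exact langGenFun_isNRational' n R hR
end

section
/- For every integer N ≥ 1, the Baumslag–Solitar group BS(N,N) = ⟨a, t ∣ t a^N t^{-1} = a^N⟩ contains a subgroup of index N that is isomorphic to ℤ × F_N, the direct product of an infinite cyclic group with the free group of rank N; namely, the subgroup generated by a^N together with the elements a^i t a^{-i} for 0 ≤ i ≤ N−1. -/
/-- The Baumslag–Solitar group `BS(N,N) = ⟨a, t ∣ t a^N t⁻¹ = a^N⟩`, presented on two
generators `a` (encoded by `false`) and `t` (encoded by `true`). -/
def BS (N : ℤ) : Type :=
  PresentedGroup ({FreeGroup.of true * FreeGroup.of false ^ N * (FreeGroup.of true)⁻¹ *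
    (FreeGroup.of false ^ N)⁻¹} : Set (FreeGroup Bool))

instance (N : ℤ) : Group (BS N) := by unfold BS; infer_instance

/-- The generator `a` of `BS(N,N)`. -/
def BSa (N : ℤ) : BS N := PresentedGroup.of false

/-- The generator `t` of `BS(N,N)`. -/
def BSt (N : ℤ) : BS N := PresentedGroup.of true


namespace BSaux

set_option linter.unusedSectionVars false
open Fin.NatCast

abbrev rels (N : ℤ) : Set (FreeGroup Bool) :=
  {FreeGroup.of true * FreeGroup.of false ^ N * (FreeGroup.of true)⁻¹ *
    (FreeGroup.of false ^ N)⁻¹}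

lemma comm_t (N : ℤ) : BSt N * BSa N ^ N = BSa N ^ N * BSt N := by
  have h : PresentedGroup.mk (rels N)
      (FreeGroup.of true * FreeGroup.of false ^ N * (FreeGroup.of true)⁻¹ *
        (FreeGroup.of false ^ N)⁻¹) = 1 := by
    apply (QuotientGroup.eq_one_iff _).mpr
    exact Subgroup.subset_normalClosure rfl
  simp only [map_mul, map_zpow, map_inv] at h
  have h2 : BSt N * BSa N ^ N * (BSt N)⁻¹ * (BSa N ^ N)⁻¹ = 1 := h
  rw [mul_inv_eq_one, mul_inv_eq_iff_eq_mul] at h2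
  exact h2

lemma central (N : ℤ) (g : BS N) : Commute (BSa N ^ N) g := by
  have hg : g ∈ Subgroup.centralizer {BSa N ^ N} := by
    apply PresentedGroup.generated_by
    intro j
    refine Subgroup.mem_centralizer_iff.mpr ?_
    rintro h rfl
    cases j
    · exact ((Commute.refl (BSa N)).zpow_left N).eq
    · exact (comm_t N).symm
  exact Subgroup.mem_centralizer_iff.mp hg _ rfl

lemma finRotate_pow_apply (n k : ℕ) (i : Fin (n+1)) :
    (finRotate (n+1) ^ k) i = i + (k : Fin (n+1)) := by
  induction k with
  | zero => simp
  | succ k ih =>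
    rw [pow_succ', Equiv.Perm.mul_apply, finRotate_succ_apply, ih]
    rw [Nat.cast_add, Nat.cast_one, add_assoc]

variable (N : ℕ) [NeZero N]

/-- The rotation automorphism of the free group on `Fin N`. -/
def rotAut : MulAut (FreeGroup (Fin N)) := FreeGroup.freeGroupCongr (finRotate N)

/-- The action of `ℤ` on the free group by powers of the rotation. -/
def actZ : Multiplicative ℤ →* MulAut (FreeGroup (Fin N)) := zpowersHom _ (rotAut N)

/-- The target group `ℤ × (F_N ⋊ ℤ)`. -/
abbrev Mt := Multiplicative ℤ × (FreeGroup (Fin N) ⋊[actZ N] Multiplicative ℤ)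

lemma rotAut_of (i : Fin N) : rotAut N (FreeGroup.of i) = FreeGroup.of (finRotate N i) := by
  simp [rotAut, FreeGroup.freeGroupCongr]

lemma rot_pow_of (k : ℕ) (i : Fin N) :
    (rotAut N ^ k) (FreeGroup.of i) = FreeGroup.of ((finRotate N ^ k) i) := by
  induction k with
  | zero => simp
  | succ k ih =>
    rw [pow_succ', MulAut.mul_apply, ih, rotAut_of, pow_succ', Equiv.Perm.mul_apply]

lemma rot_pow_fin (k : ℕ) (i : Fin N) :
    (rotAut N ^ k) (FreeGroup.of i) = FreeGroup.of (i + (k : Fin N)) := by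
  obtain ⟨n, rfl⟩ := Nat.exists_eq_succ_of_ne_zero (NeZero.ne N)
  rw [rot_pow_of]
  exact congrArg _ (finRotate_pow_apply n k i)

lemma rot_pow_self (i : Fin N) :
    (rotAut N ^ N) (FreeGroup.of i) = FreeGroup.of i := by
  have := rot_pow_fin N N i
  rwa [Fin.natCast_self, add_zero] at this

/-- Images of the generators. -/
def fgen : Bool → Mt N := fun b =>
  if b then (1, SemidirectProduct.inl (FreeGroup.of (0 : Fin N)))
  else (Multiplicative.ofAdd 1, SemidirectProduct.inr (Multiplicative.ofAdd 1))

lemma actZ_pow_nat (k : ℕ) (i : Fin N) :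
    actZ N (Multiplicative.ofAdd (1:ℤ) ^ k) (FreeGroup.of i)
      = FreeGroup.of (i + (k : Fin N)) := by
  rw [← rot_pow_fin N k i]
  have h : actZ N (Multiplicative.ofAdd (1:ℤ) ^ k) = rotAut N ^ k := by
    rw [map_pow]
    congr 1
  rw [h]

lemma key_fix : actZ N (Multiplicative.ofAdd (1:ℤ) ^ N) (FreeGroup.of (0:Fin N))
    = FreeGroup.of (0:Fin N) := by
  rw [actZ_pow_nat, Fin.natCast_self, add_zero]

lemma inl_inr_comm : Commute
    (SemidirectProduct.inl (FreeGroup.of (0:Fin N)) :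
      FreeGroup (Fin N) ⋊[actZ N] Multiplicative ℤ)
    (SemidirectProduct.inr (Multiplicative.ofAdd (1:ℤ)) ^ N) := by
  rw [← map_pow]
  have h := SemidirectProduct.inl_aut (φ := actZ N) (Multiplicative.ofAdd (1:ℤ) ^ N)
    (FreeGroup.of (0:Fin N))
  rw [key_fix, map_inv] at h
  exact (mul_inv_eq_iff_eq_mul.mp h.symm).symm

lemma fgen_comm : fgen N true * fgen N false ^ (N:ℤ) = fgen N false ^ (N:ℤ) * fgen N true := by
  simp only [fgen, if_true, Bool.false_eq_true, if_false]
  rw [zpow_natCast, Prod.pow_mk, Prod.mk_mul_mk, Prod.mk_mul_mk, one_mul, mul_one]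
  simp only [Prod.mk.injEq]
  exact ⟨trivial, inl_inr_comm N⟩

end BSaux

namespace BSaux
set_option linter.unusedSectionVars false
open Fin.NatCast

variable (N : ℕ) [NeZero N]

lemma hrel : ∀ r ∈ rels (N:ℤ), FreeGroup.lift (fgen N) r = 1 := by
  rintro r hr
  rw [Set.mem_singleton_iff] at hr
  subst hr
  simp only [map_mul, map_inv, map_zpow, FreeGroup.lift_apply_of]
  rw [mul_inv_eq_one, mul_inv_eq_iff_eq_mul]
  exact fgen_comm N

/-- The homomorphism `BS(N,N) → ℤ × (F_N ⋊ ℤ)`. -/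
def toM : BS N →* Mt N := PresentedGroup.toGroup (hrel N)

lemma toM_a : toM N (BSa N) = fgen N false := PresentedGroup.toGroup.of _

lemma toM_t : toM N (BSt N) = fgen N true := PresentedGroup.toGroup.of _

lemma ofAdd_one_pow (k : ℕ) :
    Multiplicative.ofAdd (1:ℤ) ^ k = Multiplicative.ofAdd (k:ℤ) := by
  rw [← ofAdd_nsmul]; norm_num

lemma ofAdd_one_zpow (m : ℤ) :
    Multiplicative.ofAdd (1:ℤ) ^ m = Multiplicative.ofAdd m := by
  rw [← ofAdd_zsmul]; norm_num

lemma Apow (k : ℕ) : fgen N false ^ k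
    = (Multiplicative.ofAdd (k:ℤ), SemidirectProduct.inr (Multiplicative.ofAdd (k:ℤ))) := by
  simp only [fgen, Bool.false_eq_true, if_false]
  rw [Prod.pow_mk, ofAdd_one_pow, ← MonoidHom.map_pow, ofAdd_one_pow]

lemma toM_aN : toM N (BSa N ^ N)
    = (Multiplicative.ofAdd (N:ℤ), SemidirectProduct.inr (Multiplicative.ofAdd (N:ℤ))) := by
  rw [map_pow, toM_a, Apow]

lemma toM_ti (i : Fin N) : toM N (BSa N ^ (i:ℕ) * BSt N * (BSa N ^ (i:ℕ))⁻¹)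
    = (1, SemidirectProduct.inl (FreeGroup.of i)) := by
  rw [map_mul, map_mul, map_inv, map_pow, toM_a, toM_t, Apow]
  simp only [fgen, if_true]
  rw [Prod.inv_mk, Prod.mk_mul_mk, Prod.mk_mul_mk, mul_one]
  rw [Prod.mk.injEq]
  constructor
  · exact mul_inv_cancel _
  · rw [← map_inv, ← SemidirectProduct.inl_aut, ← ofAdd_one_pow, actZ_pow_nat]
    rw [zero_add, Fin.cast_val_eq_self]

end BSaux

namespace BSaux
set_option linter.unusedSectionVars false

variable (N : ℕ) [NeZero N]

lemma central' (g : BS N) : Commute (BSa N ^ (N:ℕ)) g := by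
  have h := central (N:ℤ) g
  rwa [zpow_natCast] at h

/-- Generators of the subgroup. -/
abbrev gens : Set (BS N) :=
  {BSa N ^ (N:ℕ)} ∪ Set.range (fun i : Fin N => BSa N ^ (i : ℕ) * BSt N * (BSa N ^ (i : ℕ))⁻¹)

abbrev KN : Subgroup (BS N) := Subgroup.closure (gens N)

def psi1 : Multiplicative ℤ →* BS N := zpowersHom _ (BSa N ^ (N:ℕ))

def psi2 : FreeGroup (Fin N) →* BS N :=
  FreeGroup.lift (fun i => BSa N ^ (i:ℕ) * BSt N * (BSa N ^ (i:ℕ))⁻¹)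

def psi : Multiplicative ℤ × FreeGroup (Fin N) →* BS N :=
  MonoidHom.noncommCoprod (psi1 N) (psi2 N)
    (fun m w => (central' N (psi2 N w)).zpow_left m.toAdd)

lemma toM_psi2 (w : FreeGroup (Fin N)) :
    toM N (psi2 N w) = (1, SemidirectProduct.inl w) := by
  have h : (toM N).comp (psi2 N)
      = (MonoidHom.inr (Multiplicative ℤ) _).comp (SemidirectProduct.inl) := by
    apply FreeGroup.ext_hom
    intro i
    simp only [MonoidHom.comp_apply, psi2, FreeGroup.lift_apply_of]
    rw [toM_ti]
    rfl
  exact DFunLike.congr_fun h w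

lemma ofAdd_one_zpow' (x : Multiplicative ℤ) :
    Multiplicative.ofAdd (N:ℤ) ^ x.toAdd = Multiplicative.ofAdd (x.toAdd * N) := by
  rw [← ofAdd_zsmul]; norm_num

lemma prod_zpow {G H : Type*} [Group G] [Group H] (a : G) (b : H) (m : ℤ) :
    (a, b) ^ m = (a ^ m, b ^ m) := rfl

lemma psi_apply (x : Multiplicative ℤ) (w : FreeGroup (Fin N)) :
    psi N (x, w) = (BSa N ^ (N:ℕ)) ^ x.toAdd * psi2 N w := rfl

lemma psi_inj : Function.Injective (psi N) := by
  rw [injective_iff_map_eq_one]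
  rintro ⟨x, w⟩ h
  have h2 := congrArg (toM N) h
  rw [map_one, psi_apply, map_mul, map_zpow, toM_aN, toM_psi2] at h2
  rw [prod_zpow, Prod.mk_mul_mk, mul_one, ← MonoidHom.map_zpow, ofAdd_one_zpow'] at h2
  rw [Prod.mk_eq_one] at h2
  obtain ⟨h3, h4⟩ := h2
  have hx0 : Multiplicative.toAdd x = 0 := by
    have h5 := congrArg Multiplicative.toAdd h3
    simp only [toAdd_ofAdd, toAdd_one] at h5
    rcases mul_eq_zero.mp h5 with h | h
    · exact h
    · exact absurd h (by exact_mod_cast NeZero.ne N)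
  rw [hx0, zero_mul, ofAdd_zero, map_one, one_mul] at h4
  have hw : w = 1 := by
    have hinj := SemidirectProduct.inl_injective (G := Multiplicative ℤ) (φ := actZ N)
    exact hinj (by rw [h4]; rfl)
  rw [Prod.mk_eq_one]
  exact ⟨by rw [← ofAdd_toAdd x, hx0]; rfl, hw⟩

end BSaux

namespace BSaux
set_option linter.unusedSectionVars false

variable (N : ℕ) [NeZero N]

lemma psi2_mem (w : FreeGroup (Fin N)) : psi2 N w ∈ KN N := by
  induction w using FreeGroup.induction_on with
  | C1 => exact one_mem _
  | of i =>
    have h : psi2 N (FreeGroup.of i) = BSa N ^ (i:ℕ) * BSt N * (BSa N ^ (i:ℕ))⁻¹ :=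
      FreeGroup.lift_apply_of
    rw [h]
    exact Subgroup.subset_closure (Or.inr ⟨i, rfl⟩)
  | inv_of i h =>
    rw [map_inv]
    exact inv_mem h
  | mul x y hx hy =>
    rw [map_mul]
    exact mul_mem hx hy

lemma psi_range : (psi N).range = KN N := by
  apply le_antisymm
  · rintro g ⟨⟨x, w⟩, rfl⟩
    rw [psi_apply]
    have hmem : BSa N ^ (N:ℕ) ∈ KN N :=
      Subgroup.subset_closure (Set.mem_union_left _ (Set.mem_singleton _))
    exact mul_mem (zpow_mem hmem _) (psi2_mem N w)
  · rw [Subgroup.closure_le]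
    rintro g (rfl | ⟨i, rfl⟩)
    · exact ⟨(Multiplicative.ofAdd 1, 1), by simp [psi_apply]⟩
    · exact ⟨(1, FreeGroup.of i), by simp [psi_apply, psi2]⟩

/-- The mod-`N` exponent-sum-of-`a` homomorphism. -/
def chi : BS N →* Multiplicative (ZMod N) :=
  PresentedGroup.toGroup (f := fun b => if b then 1 else Multiplicative.ofAdd 1)
    (by
      rintro r hr
      rw [Set.mem_singleton_iff] at hr
      subst hr
      simp only [map_mul, map_inv, map_zpow, FreeGroup.lift_apply_of]
      rw [mul_inv_eq_one, mul_inv_eq_iff_eq_mul]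
      exact mul_comm _ _)

lemma chi_a : chi N (BSa N) = Multiplicative.ofAdd 1 := PresentedGroup.toGroup.of _

lemma chi_t : chi N (BSt N) = 1 := PresentedGroup.toGroup.of _

lemma chi_pow_a (k : ℕ) : chi N (BSa N ^ k) = Multiplicative.ofAdd (k : ZMod N) := by
  rw [map_pow, chi_a, ← ofAdd_nsmul]
  norm_num

lemma K_le_ker : KN N ≤ (chi N).ker := by
  rw [Subgroup.closure_le]
  rintro g (rfl | ⟨i, rfl⟩)
  · rw [SetLike.mem_coe, MonoidHom.mem_ker, chi_pow_a, ZMod.natCast_self, ofAdd_zero]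
  · rw [SetLike.mem_coe, MonoidHom.mem_ker, map_mul, map_mul, map_inv, chi_t, mul_one,
      mul_inv_cancel]

end BSaux

namespace BSaux
set_option linter.unusedSectionVars false

variable (N : ℕ) [NeZero N]

lemma conj_aN (g : BS N) : BSa N ^ (N:ℕ) * g * (BSa N ^ (N:ℕ))⁻¹ = g := by
  rw [(central' N g).eq, mul_inv_cancel_right]

lemma t_mem : BSt N ∈ KN N := by
  apply Subgroup.subset_closure
  refine Set.mem_union_right _ ⟨⟨0, Nat.pos_of_ne_zero (NeZero.ne N)⟩, ?_⟩
  simp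

lemma conj_a_mem : ∀ k ∈ KN N, BSa N * k * (BSa N)⁻¹ ∈ KN N := by
  intro k hk
  induction hk using Subgroup.closure_induction with
  | mem x hx =>
    rcases hx with rfl | ⟨i, rfl⟩
    · rw [← (central' N (BSa N)).eq, mul_inv_cancel_right]
      exact Subgroup.subset_closure (Set.mem_union_left _ (Set.mem_singleton _))
    · by_cases hi : (i:ℕ) + 1 < N
      · have heq : BSa N * (BSa N ^ (i:ℕ) * BSt N * (BSa N ^ (i:ℕ))⁻¹) * (BSa N)⁻¹
            = BSa N ^ ((i:ℕ)+1) * BSt N * (BSa N ^ ((i:ℕ)+1))⁻¹ := by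
          group
        rw [heq]
        exact Subgroup.subset_closure (Set.mem_union_right _ ⟨⟨(i:ℕ)+1, hi⟩, rfl⟩)
      · have hiN : (i:ℕ) + 1 = N := by omega
        have heq : BSa N * (BSa N ^ (i:ℕ) * BSt N * (BSa N ^ (i:ℕ))⁻¹) * (BSa N)⁻¹
            = BSa N ^ ((i:ℕ)+1) * BSt N * (BSa N ^ ((i:ℕ)+1))⁻¹ := by
          group
        rw [heq, hiN, conj_aN]
        exact t_mem N
  | one => simpa using one_mem (KN N)
  | mul x y hx hy hx' hy' =>
    have heq : BSa N * (x * y) * (BSa N)⁻¹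
        = (BSa N * x * (BSa N)⁻¹) * (BSa N * y * (BSa N)⁻¹) := by group
    rw [heq]; exact mul_mem hx' hy'
  | inv x hx hx' =>
    have heq : BSa N * x⁻¹ * (BSa N)⁻¹ = (BSa N * x * (BSa N)⁻¹)⁻¹ := by group
    rw [heq]; exact inv_mem hx'

lemma conj_ainv_mem : ∀ k ∈ KN N, (BSa N)⁻¹ * k * BSa N ∈ KN N := by
  intro k hk
  induction hk using Subgroup.closure_induction with
  | mem x hx =>
    rcases hx with rfl | ⟨i, rfl⟩
    · rw [← (central' N ((BSa N)⁻¹)).eq, inv_mul_cancel_right]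
      exact Subgroup.subset_closure (Set.mem_union_left _ (Set.mem_singleton _))
    · by_cases hi : 1 ≤ (i:ℕ)
      · have hii : (i:ℕ) = ((i:ℕ)-1) + 1 := by omega
        have heq : (BSa N)⁻¹ * (BSa N ^ (i:ℕ) * BSt N * (BSa N ^ (i:ℕ))⁻¹) * BSa N
            = BSa N ^ ((i:ℕ)-1) * BSt N * (BSa N ^ ((i:ℕ)-1))⁻¹ := by
          rw [hii]
          group
          norm_num
        rw [heq]
        exact Subgroup.subset_closure
          (Set.mem_union_right _ ⟨⟨(i:ℕ)-1, by omega⟩, rfl⟩)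
      · have hi0 : (i:ℕ) = 0 := by omega
        have hNN : ((N:ℕ)-1) + 1 = N := Nat.succ_pred_eq_of_pos (Nat.pos_of_ne_zero (NeZero.ne N))
        have h3 : (BSa N)⁻¹ * (BSa N ^ (i:ℕ) * BSt N * (BSa N ^ (i:ℕ))⁻¹) * BSa N
            = BSa N ^ ((N:ℕ)-1) * BSt N * (BSa N ^ ((N:ℕ)-1))⁻¹ := by
          rw [hi0]
          calc (BSa N)⁻¹ * (BSa N ^ (0:ℕ) * BSt N * (BSa N ^ (0:ℕ))⁻¹) * BSa N
              = (BSa N)⁻¹ * BSt N * BSa N := by group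
            _ = BSa N ^ (N:ℕ) * ((BSa N)⁻¹ * BSt N * BSa N)
                  * (BSa N ^ (N:ℕ))⁻¹ := (conj_aN N _).symm
            _ = BSa N ^ (((N:ℕ)-1)+1) * ((BSa N)⁻¹ * BSt N * BSa N)
                  * (BSa N ^ (((N:ℕ)-1)+1))⁻¹ := by rw [hNN]
            _ = BSa N ^ ((N:ℕ)-1) * BSt N * (BSa N ^ ((N:ℕ)-1))⁻¹ := by group
        rw [h3]
        exact Subgroup.subset_closure
          (Set.mem_union_right _ ⟨⟨(N:ℕ)-1, by omega⟩, rfl⟩)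
  | one => simpa using one_mem (KN N)
  | mul x y hx hy hx' hy' =>
    have heq : (BSa N)⁻¹ * (x * y) * BSa N
        = ((BSa N)⁻¹ * x * BSa N) * ((BSa N)⁻¹ * y * BSa N) := by group
    rw [heq]; exact mul_mem hx' hy'
  | inv x hx hx' =>
    have heq : (BSa N)⁻¹ * x⁻¹ * BSa N = ((BSa N)⁻¹ * x * BSa N)⁻¹ := by group
    rw [heq]; exact inv_mem hx'

end BSaux

namespace BSaux
set_option linter.unusedSectionVars false

variable (N : ℕ) [NeZero N]

lemma conj_zpow_mem : ∀ (m : ℤ), ∀ k ∈ KN N, BSa N ^ m * k * (BSa N ^ m)⁻¹ ∈ KN N := by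
  intro m
  induction m using Int.induction_on with
  | zero => intro k hk; simpa using hk
  | succ n ih =>
    intro k hk
    have heq : BSa N ^ ((n:ℤ)+1) * k * (BSa N ^ ((n:ℤ)+1))⁻¹
        = BSa N ^ (n:ℤ) * (BSa N * k * (BSa N)⁻¹) * (BSa N ^ (n:ℤ))⁻¹ := by group
    rw [heq]
    exact ih _ (conj_a_mem N k hk)
  | pred n ih =>
    intro k hk
    have heq : BSa N ^ (-(n:ℤ)-1) * k * (BSa N ^ (-(n:ℤ)-1))⁻¹
        = BSa N ^ (-(n:ℤ)) * ((BSa N)⁻¹ * k * BSa N) * (BSa N ^ (-(n:ℤ)))⁻¹ := by group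
    rw [heq]
    exact ih _ (conj_ainv_mem N k hk)

/-- The set of elements expressible as `k * a^m`. -/
def Hsub : Subgroup (BS N) where
  carrier := {g | ∃ m : ℤ, g * (BSa N ^ m)⁻¹ ∈ KN N}
  one_mem' := ⟨0, by simpa using one_mem (KN N)⟩
  mul_mem' := by
    rintro x y ⟨m, hm⟩ ⟨n, hn⟩
    refine ⟨m + n, ?_⟩
    have heq : x * y * (BSa N ^ (m+n))⁻¹
        = (x * (BSa N ^ m)⁻¹) * (BSa N ^ m * (y * (BSa N ^ n)⁻¹) * (BSa N ^ m)⁻¹) := by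
      group
    rw [heq]
    exact mul_mem hm (conj_zpow_mem N m _ hn)
  inv_mem' := by
    rintro x ⟨m, hm⟩
    refine ⟨-m, ?_⟩
    have heq : x⁻¹ * (BSa N ^ (-m))⁻¹
        = BSa N ^ (-m) * ((x * (BSa N ^ m)⁻¹)⁻¹) * (BSa N ^ (-m))⁻¹ := by group
    rw [heq]
    exact conj_zpow_mem N (-m) _ (inv_mem hm)

lemma exists_coset (g : BS N) : ∃ m : ℤ, g * (BSa N ^ m)⁻¹ ∈ KN N := by
  have hg : g ∈ Hsub N := by
    apply PresentedGroup.generated_by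
    intro j
    cases j
    · refine ⟨1, ?_⟩
      show BSa N * (BSa N ^ (1:ℤ))⁻¹ ∈ KN N
      rw [zpow_one, mul_inv_cancel]
      exact one_mem _
    · refine ⟨0, ?_⟩
      show BSt N * (BSa N ^ (0:ℤ))⁻¹ ∈ KN N
      rw [zpow_zero, inv_one, mul_one]
      exact t_mem N
  exact hg

lemma ker_le_K : (chi N).ker ≤ KN N := by
  intro g hg
  obtain ⟨m, hm⟩ := exists_coset N g
  have h1 : chi N (g * (BSa N ^ m)⁻¹) = 1 := K_le_ker N hm
  rw [map_mul, map_inv, map_zpow, chi_a, MonoidHom.mem_ker.mp hg, one_mul] at h1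
  rw [inv_eq_one] at h1
  have h2 : ((m : ZMod N) : ZMod N) = 0 := by
    have h3 := congrArg Multiplicative.toAdd h1
    rw [← ofAdd_zsmul] at h1
    have h4 := congrArg Multiplicative.toAdd h1
    simpa using h4
  have h5 : (N:ℤ) ∣ m := by
    rwa [ZMod.intCast_zmod_eq_zero_iff_dvd] at h2
  obtain ⟨q, rfl⟩ := h5
  have h6 : BSa N ^ ((N:ℤ) * q) ∈ KN N := by
    rw [zpow_mul]
    apply zpow_mem
    rw [zpow_natCast]
    exact Subgroup.subset_closure (Set.mem_union_left _ (Set.mem_singleton _))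
  have h7 : g = (g * (BSa N ^ ((N:ℤ)*q))⁻¹) * BSa N ^ ((N:ℤ)*q) := by group
  rw [h7]
  exact mul_mem hm h6

lemma K_eq_ker : KN N = (chi N).ker := le_antisymm (K_le_ker N) (ker_le_K N)

lemma chi_surj : Function.Surjective (chi N) := by
  intro x
  refine ⟨BSa N ^ (x.toAdd.val), ?_⟩
  rw [chi_pow_a]
  have : ((x.toAdd.val : ℕ) : ZMod N) = x.toAdd := ZMod.natCast_rightInverse x.toAdd
  rw [this, ofAdd_toAdd]

lemma K_index : (KN N).index = N := by
  rw [K_eq_ker, Subgroup.index_ker]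
  rw [MonoidHom.range_eq_top.mpr (chi_surj N)]
  rw [Nat.card_congr (Subgroup.topEquiv.toEquiv)]
  rw [Nat.card_congr Multiplicative.toAdd]
  exact Nat.card_zmod N

end BSaux


/-- For `N ≥ 1`, the subgroup of `BS(N,N)` generated by `a^N` and the elements
`a^i t a^{-i}` for `0 ≤ i ≤ N-1` has index `N` and is isomorphic to `ℤ × F_N`. -/
theorem BS_virtually_Z_times_free (N : ℕ) (hN : 1 ≤ N)
    (K : Subgroup (BS N))
    (hK : K = Subgroup.closure
      ({BSa N ^ N} ∪ Set.range (fun i : Fin N => BSa N ^ (i : ℕ) * BSt N * (BSa N ^ (i : ℕ))⁻¹))) :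
    K.index = N ∧ Nonempty (K ≃* Multiplicative ℤ × FreeGroup (Fin N)) := by
  haveI : NeZero N := ⟨by omega⟩
  have hKN : K = BSaux.KN N := hK
  constructor
  · rw [hKN]
    exact BSaux.K_index N
  · have h1 : K = (BSaux.psi N).range := by rw [hKN, BSaux.psi_range]
    exact ⟨(MulEquiv.subgroupCongr h1).trans (MonoidHom.ofInjective (BSaux.psi_inj N)).symm⟩
end

section
/- For every integer N ≥ 1, in the Baumslag–Solitar group BS(N,N) = ⟨a, t ∣ t a^N t^{-1} = a^N⟩, the N elements t, a t a^{-1}, a^2 t a^{-2}, ..., a^{N-1} t a^{1-N} generate a subgroup that is a free group of rank N, freely generated by these elements. -/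
section Aux

variable (N : ℕ)

/-- The action of `ZMod N` on `FreeGroup (ZMod N)` by shifting generators. -/
def BSrho : Multiplicative (ZMod N) →* MulAut (FreeGroup (ZMod N)) where
  toFun k := FreeGroup.freeGroupCongr (Equiv.addLeft k.toAdd)
  map_one' := by
    ext x
    simp
  map_mul' k l := by
    have : (Equiv.addLeft (k * l).toAdd : ZMod N ≃ ZMod N) =
        (Equiv.addLeft l.toAdd).trans (Equiv.addLeft k.toAdd) := by
      ext x
      simp [add_assoc]
    show FreeGroup.freeGroupCongr _ = _
    rw [this, ← FreeGroup.freeGroupCongr_trans]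
    rfl

/-- The target semidirect product. -/
abbrev BSG := FreeGroup (ZMod N) ⋊[BSrho N] Multiplicative (ZMod N)

lemma BSrel (N : ℕ) :
    ∀ r ∈ ({FreeGroup.of true * FreeGroup.of false ^ (N : ℤ) * (FreeGroup.of true)⁻¹ *
      (FreeGroup.of false ^ (N : ℤ))⁻¹} : Set (FreeGroup Bool)),
      FreeGroup.lift (fun b : Bool => if b then
        (SemidirectProduct.inl (FreeGroup.of (0 : ZMod N)) : BSG N)
        else SemidirectProduct.inr (Multiplicative.ofAdd (1 : ZMod N))) r = 1 := by
  intro r hr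
  rw [Set.mem_singleton_iff] at hr
  subst hr
  have h1 : ((Multiplicative.ofAdd (1 : ZMod N)) ^ (N : ℤ)) = 1 := by
    rw [← ofAdd_zsmul]
    simp [ZMod.natCast_self]
  have h1n : ((Multiplicative.ofAdd (1 : ZMod N)) ^ N) = 1 := by
    rw [← ofAdd_nsmul]
    simp [ZMod.natCast_self]
  have h2 : (SemidirectProduct.inr (Multiplicative.ofAdd (1 : ZMod N)) : BSG N) ^ (N : ℤ) = 1 := by
    rw [← map_zpow, h1, map_one]
  have h2n : (SemidirectProduct.inr (Multiplicative.ofAdd (1 : ZMod N)) : BSG N) ^ N = 1 := by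
    rw [← map_pow, h1n, map_one]
  simp [h2, h2n]

/-- The retraction-like homomorphism from `BS N` to the semidirect product. -/
def BSphi : BS (N : ℤ) →* BSG N := PresentedGroup.toGroup (BSrel N)

lemma BSphi_a : BSphi N (BSa N) = SemidirectProduct.inr (Multiplicative.ofAdd (1 : ZMod N)) :=
  PresentedGroup.toGroup.of (BSrel N) (x := false)

lemma BSphi_t : BSphi N (BSt N) = SemidirectProduct.inl (FreeGroup.of (0 : ZMod N)) :=
  PresentedGroup.toGroup.of (BSrel N) (x := true)

end Aux

/-- For `N ≥ 1`, the elements `t, a t a⁻¹, …, a^{N-1} t a^{1-N}` of `BS(N,N)` freely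
generate a free subgroup of rank `N`: the homomorphism from `F_N` sending the `i`-th free
generator to `a^i t a^{-i}` is injective. -/
theorem BS_free_subgroup (N : ℕ) (hN : 1 ≤ N) :
    Function.Injective
      (FreeGroup.lift (fun i : Fin N => BSa N ^ (i : ℕ) * BSt N * (BSa N ^ (i : ℕ))⁻¹) :
        FreeGroup (Fin N) →* BS N) := by
  have : NeZero N := ⟨by omega⟩
  set L := (FreeGroup.lift (fun i : Fin N => BSa N ^ (i : ℕ) * BSt N * (BSa N ^ (i : ℕ))⁻¹) :
      FreeGroup (Fin N) →* BS N)
  -- the injective "inclusion" map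
  set e : Fin N → ZMod N := fun i => ((i : ℕ) : ZMod N) with he
  set ψ : FreeGroup (Fin N) →* FreeGroup (ZMod N) := FreeGroup.map e with hψ
  have hψinj : Function.Injective ψ := by
    set v : ZMod N → Fin N := fun z => ⟨z.val, z.val_lt⟩ with hv
    have hleft : ∀ x, FreeGroup.map v (ψ x) = x := by
      intro x
      have : (FreeGroup.map v).comp ψ = MonoidHom.id _ := by
        refine FreeGroup.ext_hom _ _ fun i => ?_
        show FreeGroup.map v (FreeGroup.map e (FreeGroup.of i)) = FreeGroup.of i
        rw [FreeGroup.map.of, FreeGroup.map.of]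
        congr 1
        exact Fin.ext (by simp [hv, he, ZMod.val_natCast_of_lt i.isLt])
      simpa using DFunLike.congr_fun this x
    exact Function.LeftInverse.injective hleft
  have key : (BSphi N).comp L = (SemidirectProduct.inl
      (φ := BSrho N) : FreeGroup (ZMod N) →* BSG N).comp ψ := by
    refine FreeGroup.ext_hom _ _ fun i => ?_
    have h1 : BSphi N (BSa N ^ (i : ℕ)) =
        SemidirectProduct.inr (Multiplicative.ofAdd ((i : ℕ) : ZMod N)) := by
      rw [map_pow, BSphi_a, ← map_pow]
      congr 1
      rw [← ofAdd_nsmul, nsmul_eq_mul, mul_one]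
    have h2 : BSphi N (BSa N ^ (i : ℕ) * BSt N * (BSa N ^ (i : ℕ))⁻¹) =
        SemidirectProduct.inl (FreeGroup.of (((i : ℕ) : ZMod N))) := by
      rw [map_mul, map_mul, map_inv, h1, BSphi_t, ← map_inv,
        ← SemidirectProduct.inl_aut]
      congr 1
      show FreeGroup.freeGroupCongr
        (Equiv.addLeft (Multiplicative.toAdd (Multiplicative.ofAdd ((i : ℕ) : ZMod N))))
          (FreeGroup.of (0 : ZMod N)) = _
      simp
    show BSphi N (L (FreeGroup.of i)) = SemidirectProduct.inl (ψ (FreeGroup.of i))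
    simp only [L, FreeGroup.lift_apply_of, hψ, FreeGroup.map.of, he]
    exact h2
  have : Function.Injective ((BSphi N).comp L) := by
    rw [key]
    exact SemidirectProduct.inl_injective.comp hψinj
  exact Function.Injective.of_comp (f := BSphi N) this
end

section
/- Let G be a group with finite monoid generating set X, and let H be a subgroup of G of finite index. Then the language { w ∈ X* : the element of G represented by w lies in H } is a regular language over the alphabet X. -/
private lemma coset_dfa_evalFrom {G : Type} [Group G] (X : Finset G) (H : Subgroup G)
    (M : DFA {x : G // x ∈ X} (G ⧸ H))
    (hstep : ∀ q a, M.step q a = (a : G)⁻¹ • q) :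
    ∀ (w : List {x : G // x ∈ X}) (q : G ⧸ H),
      M.evalFrom q w = ((w.map Subtype.val).prod)⁻¹ • q := by
  intro w
  induction w with
  | nil => intro q; simp [DFA.evalFrom]
  | cons a t ih =>
      intro q
      show M.evalFrom (M.step q a) t = _
      rw [ih, hstep]
      simp [mul_smul, mul_inv_rev]

/-- Let `G` be a group with finite monoid generating set `X` and let `H` be a finite-index
subgroup of `G`. Then the language of words over `X` representing an element of `H` is a
regular language. -/
theorem coset_language_isRegular {G : Type} [Group G]
    (X : Finset G) (hX : Submonoid.closure (X : Set G) = ⊤)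
    (H : Subgroup G) (hfin : H.FiniteIndex) :
    Language.IsRegular
      {w : List {x : G // x ∈ X} | (w.map Subtype.val).prod ∈ H} := by
  classical
  haveI : Finite (G ⧸ H) := Subgroup.finite_quotient_of_finiteIndex
  haveI : Fintype (G ⧸ H) := Fintype.ofFinite _
  refine ⟨G ⧸ H, inferInstance,
    ⟨fun q a => (a : G)⁻¹ • q, ((1 : G) : G ⧸ H), {((1 : G) : G ⧸ H)}⟩, ?_⟩
  ext w
  rw [DFA.mem_accepts]
  show _ ∈ ({((1 : G) : G ⧸ H)} : Set _) ↔ _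
  rw [DFA.eval, coset_dfa_evalFrom X H _ (fun _ _ => rfl)]
  have : ((w.map Subtype.val).prod)⁻¹ • ((1 : G) : G ⧸ H)
      = ((((w.map Subtype.val).prod)⁻¹ * 1 : G) : G ⧸ H) := rfl
  rw [Set.mem_singleton_iff, this, mul_one, QuotientGroup.eq]
  simp [Set.mem_setOf_eq]
  rfl
end
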